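/- Let W be an m×n integer matrix giving a positive grading, i.e. the rows of W are ℤ-linearly independent, no column of W is zero, and the first non-zero entry of each column of W is positive. Then there exists a term ordering (monomial order) σ on ℕ^n which is compatible with deg_W: for all α, β ∈ ℕ^n, if W·α <_Lex W·β then α <_σ β. -/

import Mathlib

open MvPolynomial

/-- The `W`-degree of an exponent vector `α ∈ ℕ^n`: `W·α = ∑ⱼ αⱼ w⁽ʲ⁾ ∈ ℤ^m`. -/
def wdeg {m n : ℕ} (W : Matrix (Fin m) (Fin n) ℤ) (α : Fin n →₀ ℕ) : Fin m → ℤ :=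
  fun i => ∑ j, (α j : ℤ) * W i j

/-- A polynomial is `W`-homogeneous of degree `d ∈ ℤ^m` if every monomial in its support
has `W`-degree `d`. -/
def IsWHomogeneous {K : Type*} [CommSemiring K] {m n : ℕ} (W : Matrix (Fin m) (Fin n) ℤ)
    (p : MvPolynomial (Fin n) K) (d : Fin m → ℤ) : Prop :=
  ∀ α ∈ p.support, wdeg W α = d

/-- The grading given by `W` is positive: the rows of `W` are `ℤ`-linearly independent,
no column of `W` is zero, and the first non-zero entry of each column of `W` is positive. -/
def PositiveGrading {m n : ℕ} (W : Matrix (Fin m) (Fin n) ℤ) : Prop :=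
  LinearIndependent ℤ (fun i : Fin m => (fun j => W i j : Fin n → ℤ)) ∧
  (∀ j : Fin n, ∃ i : Fin m, W i j ≠ 0) ∧
  (∀ j : Fin n, ∃ i : Fin m, 0 < W i j ∧ ∀ i' < i, W i' j = 0)

namespace StmtAux

open Finsupp

universe u

variable {m n : ℕ} (W : Matrix (Fin m) (Fin n) ℤ)

/-- `wdeg` as a finsupp. -/
noncomputable def wdegF (α : Fin n →₀ ℕ) : Fin m →₀ ℤ :=
  Finsupp.addEquivFunOnFinite.symm (wdeg W α)

theorem wdegF_apply (α : Fin n →₀ ℕ) (i : Fin m) : wdegF W α i = wdeg W α i := by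
  rfl

theorem wdeg_add (a b : Fin n →₀ ℕ) : wdeg W (a + b) = wdeg W a + wdeg W b := by
  funext i
  simp only [wdeg, Finsupp.coe_add, Pi.add_apply, Nat.cast_add, add_mul]
  rw [Finset.sum_add_distrib]

theorem wdeg_zero : wdeg W (0 : Fin n →₀ ℕ) = 0 := by
  funext i; simp [wdeg]

theorem wdegF_add (a b : Fin n →₀ ℕ) : wdegF W (a + b) = wdegF W a + wdegF W b := by
  rw [wdegF, wdeg_add, map_add]; rfl

theorem wdegF_zero : wdegF W (0 : Fin n →₀ ℕ) = 0 := by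
  rw [wdegF, wdeg_zero, map_zero]

theorem wdegF_single (j : Fin n) (k : ℕ) :
    wdegF W (Finsupp.single j k) = k • (Finsupp.addEquivFunOnFinite.symm fun i => W i j) := by
  ext i
  simp only [wdegF_apply, wdeg, Finsupp.single_apply, Finsupp.smul_apply]
  rw [Finset.sum_eq_single j]
  · simp [Finsupp.addEquivFunOnFinite, mul_comm]; exact mul_comm _ _
  · intro b _ hb; simp [Ne.symm hb]
  · simp

/-- The key map combining the `W`-degree and the lexicographic tiebreak. -/
noncomputable def wkey (α : Fin n →₀ ℕ) : Lex (Fin m →₀ ℤ) ×ₗ Lex (Fin n →₀ ℕ) :=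
  toLex (toLex (wdegF W α), toLex α)

theorem wkey_injective : Function.Injective (wkey W) := by
  intro a b h
  have := congrArg (fun x => ofLex (ofLex x).2) h
  exact this

theorem wkey_add (a b : Fin n →₀ ℕ) : wkey W (a + b) = wkey W a + wkey W b := by
  unfold wkey
  rw [wdegF_add]
  rfl

/-- Positivity: each column is lex-positive, hence every `W`-degree is lex-nonnegative. -/
theorem wdegF_nonneg (hW : PositiveGrading W) (γ : Fin n →₀ ℕ) :
    (0 : Lex (Fin m →₀ ℤ)) ≤ toLex (wdegF W γ) := by
  induction γ using Finsupp.induction with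
  | zero => rw [wdegF_zero]; exact le_refl _
  | single_add j k γ hj hk ih =>
    rw [wdegF_add]
    have hcol : (0 : Lex (Fin m →₀ ℤ)) ≤
        toLex (Finsupp.addEquivFunOnFinite.symm fun i => W i j) := by
      obtain ⟨i, hpos, hzero⟩ := hW.2.2 j
      apply le_of_lt
      refine ⟨i, fun i' hi' => ?_, ?_⟩
      · exact (hzero i' hi').symm
      · exact hpos
    have hsingle : (0 : Lex (Fin m →₀ ℤ)) ≤ toLex (wdegF W (Finsupp.single j k)) := by
      rw [wdegF_single]
      have : toLex ((k • (Finsupp.addEquivFunOnFinite.symm fun i => W i j) : Fin m →₀ ℤ)) =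
          k • toLex (Finsupp.addEquivFunOnFinite.symm fun i => W i j) := rfl
      rw [this]
      exact nsmul_nonneg hcol k
    calc (0 : Lex (Fin m →₀ ℤ)) ≤ toLex (wdegF W (Finsupp.single j k)) + toLex (wdegF W γ) :=
          add_nonneg hsingle ih
      _ = toLex (wdegF W (Finsupp.single j k) + wdegF W γ) := rfl

theorem wkey_monotone (hW : PositiveGrading W) :
    ∀ a b : Fin n →₀ ℕ, a ≤ b → wkey W a ≤ wkey W b := by
  intro a b hab
  obtain ⟨c, rfl⟩ := le_iff_exists_add.mp hab
  have h1 : toLex (wdegF W a) ≤ toLex (wdegF W (a + c)) := by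
    rw [wdegF_add]
    have : toLex (wdegF W a + wdegF W c) = toLex (wdegF W a) + toLex (wdegF W c) := rfl
    rw [this]
    exact le_add_of_nonneg_right (wdegF_nonneg W hW c)
  rcases lt_or_eq_of_le h1 with h | h
  · exact le_of_lt (Prod.Lex.left _ _ h)
  · show Prod.Lex _ _ (toLex (wdegF W a), toLex a) (toLex (wdegF W (a + c)), toLex (a + c))
    rw [← h]
    exact Prod.Lex.right _ (Finsupp.toLex_monotone le_self_add)

/-- The key map on the universe-lifted type. -/
noncomputable def ukey (x : ULift.{u} (Fin n →₀ ℕ)) : Lex (Fin m →₀ ℤ) ×ₗ Lex (Fin n →₀ ℕ) :=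
  wkey W x.down

theorem ukey_injective : Function.Injective (ukey.{u} W) := by
  intro a b h
  exact ULift.down_injective (wkey_injective W h)

/-- The synonym order: compare `W`-degrees lexicographically, tiebreak by lex. -/
noncomputable def synLOCACM : LinearOrder (ULift.{u} (Fin n →₀ ℕ)) :=
  LinearOrder.lift' (ukey.{u} W) (ukey_injective W)

theorem synIOAM :
    @IsOrderedAddMonoid (ULift.{u} (Fin n →₀ ℕ)) ULift.addCommMonoid
      (synLOCACM.{u} W).toPartialOrder.toPreorder := by
  refine @IsOrderedAddMonoid.mk _ ULift.addCommMonoid (synLOCACM.{u} W).toPreorder ?_ ?_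
  · intro a b h c
    change ukey W (a + c) ≤ ukey W (b + c)
    change wkey W (a.down + c.down) ≤ wkey W (b.down + c.down)
    rw [wkey_add, wkey_add]
    exact add_le_add (show wkey W a.down ≤ wkey W b.down from h) le_rfl
  · intro a b h c
    change ukey W (c + a) ≤ ukey W (c + b)
    change wkey W (c.down + a.down) ≤ wkey W (c.down + b.down)
    rw [wkey_add, wkey_add]
    exact add_le_add le_rfl (show wkey W a.down ≤ wkey W b.down from h)

theorem synLO_wf (hW : PositiveGrading W) :
    WellFounded (fun a b : ULift.{u} (Fin n →₀ ℕ) => ukey W a < ukey W b) := by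
  have : IsTrans (ULift.{u} (Fin n →₀ ℕ)) (fun a b => ukey W a < ukey W b) :=
    ⟨fun _ _ _ h1 h2 => lt_trans h1 h2⟩
  have : IsIrrefl (ULift.{u} (Fin n →₀ ℕ)) (fun a b => ukey W a < ukey W b) :=
    ⟨fun _ => lt_irrefl _⟩
  have : IsStrictOrder (ULift.{u} (Fin n →₀ ℕ)) (fun a b => ukey W a < ukey W b) := {}
  rw [RelEmbedding.wellFounded_iff_isEmpty]
  constructor
  intro g
  obtain ⟨i, j, hij, hle⟩ :=
    (Set.isPWO_of_wellQuasiOrderedLE (Set.univ : Set (Fin n →₀ ℕ))).exists_lt (f := fun k => (g k).down)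
      (fun k => Set.mem_univ _)
  have h1 : wkey W (g i).down ≤ wkey W (g j).down := wkey_monotone W hW _ _ hle
  have h2 : ukey W (g j) < ukey W (g i) := g.map_rel_iff.mpr hij
  exact absurd h1 (not_le_of_gt h2)

/-- The monomial order associated to a positive grading. -/
noncomputable def wMO (hW : PositiveGrading W) : MonomialOrder.{0, u} (Fin n) where
  syn := ULift.{u} (Fin n →₀ ℕ)
  addCommMonoidSyn := ULift.addCommMonoid
  linearOrderSyn := synLOCACM.{u} W
  isOrderedAddMonoid_syn := synIOAM.{u} W
  toSyn :=
    { toFun := ULift.up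
      invFun := ULift.down
      left_inv := fun _ => rfl
      right_inv := fun _ => rfl
      map_add' := fun _ _ => rfl }
  toSyn_monotone := fun a b h => wkey_monotone W hW a b h
  wellFoundedLT_syn := ⟨synLO_wf.{u} W hW⟩

end StmtAux

theorem stmt_5 {m n : ℕ} (W : Matrix (Fin m) (Fin n) ℤ) (hW : PositiveGrading W) :
    ∃ σ : MonomialOrder (Fin n), ∀ α β : Fin n →₀ ℕ,
      toLex (wdeg W α) < toLex (wdeg W β) → σ.toSyn α < σ.toSyn β := by
  refine ⟨StmtAux.wMO W hW, fun α β h => ?_⟩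
  change StmtAux.wkey W α < StmtAux.wkey W β
  apply Prod.Lex.left
  obtain ⟨i, hji, hi⟩ := h
  exact ⟨i, fun i' hi' => by simpa [StmtAux.wdegF_apply] using hji i' hi',
    by simpa [StmtAux.wdegF_apply] using hi⟩
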